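/- Let C be a (k,r,h) data-local maximally recoverable code with local group supports S_1, ..., S_{k/r}. Then for any subset I of {1,...,n}, the columns of a generator matrix of C indexed by I are linearly independent (i.e., ρ(I) = |I|) if and only if |I| ≤ k and |I ∩ S_i| ≤ r for all 1 ≤ i ≤ k/r. -/

import Mathlib

open Finset

/-- Coordinate index set of a `(k,r,h)` data-local code with `ℓ = k/r` local groups:
`Sum.inl (i, j)` is the `j`-th message symbol of the `i`-th local group,
`Sum.inr (Sum.inl i)` is the local parity of the `i`-th local group, and
`Sum.inr (Sum.inr t)` is the `t`-th global parity.  Its cardinality is `n = ℓr + ℓ + h`. -/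
abbrev DLIdx (ℓ r h : ℕ) : Type := (Fin ℓ × Fin r) ⊕ (Fin ℓ ⊕ Fin h)

/-- The support `S_i` of the `i`-th local group: its `r` message symbols together with its
local parity. -/
def dlGroup (ℓ r h : ℕ) (i : Fin ℓ) : Finset (DLIdx ℓ r h) :=
  insert (Sum.inr (Sum.inl i))
    ((Finset.univ : Finset (Fin r)).image fun j => Sum.inl (i, j))

/-- `ρ(U)`: the dimension of the projection of the code `C` onto the coordinates in `U`
(equivalently, the rank of the corresponding columns of a generator matrix of `C`). -/
noncomputable def dlRho (ℓ r h : ℕ) (F : Type) [Field F]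
    (C : Submodule F (DLIdx ℓ r h → F)) (U : Finset (DLIdx ℓ r h)) : ℕ :=
  Module.finrank F (C.map (LinearMap.funLeft F F (Subtype.val : ↥U → DLIdx ℓ r h)))

lemma dlGroup_card (ℓ r h : ℕ) (i : Fin ℓ) : (dlGroup ℓ r h i).card = r + 1 := by
  rw [dlGroup, Finset.card_insert_of_notMem (by simp),
    Finset.card_image_of_injective _ (fun a b hab => by simpa using hab), Finset.card_univ,
    Fintype.card_fin]

lemma mem_dlGroup {ℓ r h : ℕ} {i : Fin ℓ} {x : DLIdx ℓ r h} :
    x ∈ dlGroup ℓ r h i ↔ x = Sum.inr (Sum.inl i) ∨ ∃ j, x = Sum.inl (i, j) := by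
  simp [dlGroup, eq_comm]
lemma dlGroup_disjoint {ℓ r h : ℕ} {i i' : Fin ℓ} (hne : i ≠ i') :
    Disjoint (dlGroup ℓ r h i) (dlGroup ℓ r h i') := by
  rw [Finset.disjoint_left]
  intro x hx hx'
  rw [mem_dlGroup] at hx hx'
  rcases hx with rfl | ⟨j, rfl⟩ <;> rcases hx' with hx' | ⟨j', hx'⟩ <;>
    simp_all <;> exact hne (by simp_all)

lemma exists_E (ℓ r h : ℕ) (hr : 0 < r) (I : Finset (DLIdx ℓ r h))
    (hI : ∀ i, (I ∩ dlGroup ℓ r h i).card ≤ r) :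
    ∃ E : Finset (DLIdx ℓ r h), I ⊆ E ∧ E.card = ℓ * r + h ∧
      ∀ i, (E ∩ dlGroup ℓ r h i).card = r := by
  have hTex : ∀ i : Fin ℓ, ∃ T : Finset (DLIdx ℓ r h),
      I ∩ dlGroup ℓ r h i ⊆ T ∧ T ⊆ dlGroup ℓ r h i ∧ T.card = r :=
    fun i => Finset.exists_subsuperset_card_eq Finset.inter_subset_right (hI i)
      (by rw [dlGroup_card]; omega)
  choose T hT1 hT2 hT3 using hTex
  set G : Finset (DLIdx ℓ r h) :=
    (Finset.univ : Finset (Fin h)).image fun t => Sum.inr (Sum.inr t) with hG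
  refine ⟨(Finset.univ.biUnion T) ∪ G, ?_, ?_, ?_⟩
  · intro x hx
    rw [Finset.mem_union]
    match x with
    | Sum.inl (i, j) =>
      exact Or.inl (Finset.mem_biUnion.2 ⟨i, Finset.mem_univ _,
        hT1 i (Finset.mem_inter.2 ⟨hx, mem_dlGroup.2 (Or.inr ⟨j, rfl⟩)⟩)⟩)
    | Sum.inr (Sum.inl i) =>
      exact Or.inl (Finset.mem_biUnion.2 ⟨i, Finset.mem_univ _,
        hT1 i (Finset.mem_inter.2 ⟨hx, mem_dlGroup.2 (Or.inl rfl)⟩)⟩)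
    | Sum.inr (Sum.inr t) => exact Or.inr (by simp [hG])
  · rw [Finset.card_union_of_disjoint, Finset.card_biUnion]
    · have hGcard : G.card = h := by
        rw [hG, Finset.card_image_of_injective _ (fun a b hab => by simpa using hab),
          Finset.card_univ, Fintype.card_fin]
      simp [hT3, hGcard, mul_comm]
    · intro i _ i' _ hne
      exact (dlGroup_disjoint hne).mono (hT2 i) (hT2 i')
    · rw [Finset.disjoint_left]
      intro x hx hx'
      obtain ⟨i, _, hxi⟩ := Finset.mem_biUnion.1 hx
      have := hT2 i hxi
      rw [mem_dlGroup] at this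
      rcases this with rfl | ⟨j, rfl⟩ <;> simp [hG] at hx'
  · intro i
    have : (Finset.univ.biUnion T ∪ G) ∩ dlGroup ℓ r h i = T i := by
      ext x
      simp only [Finset.mem_inter, Finset.mem_union, Finset.mem_biUnion, Finset.mem_univ,
        true_and]
      constructor
      · rintro ⟨hx | hx, hxi⟩
        · obtain ⟨i', hxi'⟩ := hx
          rcases eq_or_ne i' i with rfl | hne
          · exact hxi'
          · exact absurd hxi (Finset.disjoint_left.1 (dlGroup_disjoint hne) (hT2 i' hxi'))
        · rw [mem_dlGroup] at hxi
          rcases hxi with rfl | ⟨j, rfl⟩ <;> simp [hG] at hx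
      · intro hx
        exact ⟨Or.inl ⟨i, hx⟩, hT2 i hx⟩
    rw [this, hT3]

lemma aux_map_restrict {F : Type} [Field F] {α : Type} [Fintype α] [DecidableEq α]
    (C : Submodule F (α → F)) {I J : Finset α} (hIJ : I ⊆ J) :
    C.map (LinearMap.funLeft F F (Subtype.val : ↥I → α)) =
      (C.map (LinearMap.funLeft F F (Subtype.val : ↥J → α))).map
        (LinearMap.funLeft F F (fun x : ↥I => (⟨x.1, hIJ x.2⟩ : ↥J))) := by
  rw [← Submodule.map_comp, ← LinearMap.funLeft_comp]
  rfl

lemma aux_rho_eq_card_iff {F : Type} [Field F] {α : Type} [Fintype α] [DecidableEq α]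
    (C : Submodule F (α → F)) (I : Finset α) :
    Module.finrank F (C.map (LinearMap.funLeft F F (Subtype.val : ↥I → α))) = I.card ↔
      C.map (LinearMap.funLeft F F (Subtype.val : ↥I → α)) = ⊤ := by
  have hfr : Module.finrank F (↥I → F) = I.card := by
    rw [Module.finrank_pi, Fintype.card_coe]
  constructor
  · intro hI
    exact Submodule.eq_top_of_finrank_eq (by rw [hI, hfr])
  · intro hI
    rw [hI, finrank_top, hfr]


/-- for a `(k,r,h)` data-local maximally recoverable code, the columns of a
generator matrix indexed by `I` are linearly independent (`ρ(I) = |I|`) iff `|I| ≤ k` and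
`|I ∩ S_i| ≤ r` for every local group `S_i`. -/
theorem stmt_3 (ℓ r h : ℕ) (hr : 0 < r) (hℓ : 0 < ℓ)
    (F : Type) [Field F] [Fintype F] [DecidableEq F]
    (C : Submodule F (DLIdx ℓ r h → F))
    -- the first `k = ℓr` coordinates are the message symbols
    (hsys : ∀ x : Fin ℓ × Fin r → F, ∃! c : DLIdx ℓ r h → F,
      c ∈ C ∧ ∀ p, c (Sum.inl p) = x p)
    -- local parities with nonzero coefficients
    (a : Fin ℓ → Fin r → F) (ha : ∀ i j, a i j ≠ 0)
    (hloc : ∀ c ∈ C, ∀ i : Fin ℓ,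
      c (Sum.inr (Sum.inl i)) = ∑ j : Fin r, a i j * c (Sum.inl (i, j)))
    -- maximal recoverability: each admissible puncturing is a [k+h, k, h+1] MDS code
    (hmrc : ∀ E : Finset (DLIdx ℓ r h), E.card = ℓ * r + h →
      (∀ i : Fin ℓ, (E ∩ dlGroup ℓ r h i).card = r) →
      Module.finrank F
          (C.map (LinearMap.funLeft F F (Subtype.val : ↥E → DLIdx ℓ r h))) = ℓ * r ∧
      ∀ y ∈ C.map (LinearMap.funLeft F F (Subtype.val : ↥E → DLIdx ℓ r h)),
        y ≠ 0 → h + 1 ≤ hammingNorm y) :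
    ∀ I : Finset (DLIdx ℓ r h),
      dlRho ℓ r h F C I = I.card ↔
        I.card ≤ ℓ * r ∧ ∀ i : Fin ℓ, (I ∩ dlGroup ℓ r h i).card ≤ r := by

  classical
  have hdimC : Module.finrank F ↥C = ℓ * r := by
    let g : ↥C →ₗ[F] (Fin ℓ × Fin r → F) :=
      (LinearMap.funLeft F F Sum.inl).comp C.subtype
    have hbij : Function.Bijective g := by
      constructor
      · intro c1 c2 hc
        obtain ⟨c, -, huniq⟩ := hsys (fun p => (c1 : DLIdx ℓ r h → F) (Sum.inl p))
        have h1 := huniq c1.1 ⟨c1.2, fun p => rfl⟩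
        have h2 := huniq c2.1 ⟨c2.2, fun p => (congrFun hc p).symm⟩
        exact Subtype.ext (h1.trans h2.symm)
      · intro x
        obtain ⟨c, ⟨hcC, hcx⟩, -⟩ := hsys x
        exact ⟨⟨c, hcC⟩, funext hcx⟩
    rw [(LinearEquiv.ofBijective g hbij).finrank_eq, Module.finrank_pi, Fintype.card_prod,
      Fintype.card_fin, Fintype.card_fin]
  intro I
  constructor
  · intro hrho
    have htop : C.map (LinearMap.funLeft F F (Subtype.val : ↥I → DLIdx ℓ r h)) = ⊤ :=
      (aux_rho_eq_card_iff C I).1 hrho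
    constructor
    · calc I.card = dlRho ℓ r h F C I := hrho.symm
        _ ≤ Module.finrank F ↥C := Submodule.finrank_map_le _ _
        _ = ℓ * r := hdimC
    · intro i
      by_contra hcge
      push_neg at hcge
      have heq : I ∩ dlGroup ℓ r h i = dlGroup ℓ r h i :=
        Finset.eq_of_subset_of_card_le Finset.inter_subset_right (by rw [dlGroup_card]; omega)
      have hsub : dlGroup ℓ r h i ⊆ I := fun x hx => by
        rw [← heq] at hx; exact (Finset.mem_inter.1 hx).1
      have hmemP : (Sum.inr (Sum.inl i) : DLIdx ℓ r h) ∈ I := hsub (mem_dlGroup.2 (Or.inl rfl))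
      set y : ↥I → F := Pi.single ⟨Sum.inr (Sum.inl i), hmemP⟩ 1 with hy
      have hyin : y ∈ C.map (LinearMap.funLeft F F (Subtype.val : ↥I → DLIdx ℓ r h)) :=
        htop ▸ Submodule.mem_top
      obtain ⟨c, hcC, hcy⟩ := hyin
      have h1 : c (Sum.inr (Sum.inl i)) = 1 := by
        have := congrFun hcy ⟨Sum.inr (Sum.inl i), hmemP⟩
        simpa [hy, LinearMap.funLeft_apply] using this
      have h0 : ∀ j : Fin r, c (Sum.inl (i, j)) = 0 := by
        intro j
        have hmem : (Sum.inl (i, j) : DLIdx ℓ r h) ∈ I := hsub (mem_dlGroup.2 (Or.inr ⟨j, rfl⟩))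
        have hne : (⟨Sum.inl (i, j), hmem⟩ : ↥I) ≠ ⟨Sum.inr (Sum.inl i), hmemP⟩ := by
          simp
        have := congrFun hcy ⟨Sum.inl (i, j), hmem⟩
        rw [hy] at this
        simpa [LinearMap.funLeft_apply, Pi.single_eq_of_ne hne] using this
      have hcontra := hloc c hcC i
      rw [h1] at hcontra
      simp only [h0, mul_zero, Finset.sum_const_zero] at hcontra
      exact one_ne_zero hcontra
  · rintro ⟨hcard, hgroups⟩
    obtain ⟨E, hIE, hEcard, hEint⟩ := exists_E ℓ r h hr I hgroups
    obtain ⟨hE1, hE2⟩ := hmrc E hEcard hEint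
    obtain ⟨J, hIJ, hJE, hJcard⟩ := Finset.exists_subsuperset_card_eq hIE hcard (by omega)
    set f : (↥E → F) →ₗ[F] (↥J → F) :=
      LinearMap.funLeft F F (fun x : ↥J => (⟨x.1, hJE x.2⟩ : ↥E)) with hf
    set P := C.map (LinearMap.funLeft F F (Subtype.val : ↥E → DLIdx ℓ r h)) with hP
    have hinj : ∀ y ∈ P, f y = 0 → y = 0 := by
      intro y hy hfy
      by_contra hy0
      have hnorm := hE2 y hy hy0
      have hle : hammingNorm y ≤ (E \ J).card := by
        unfold hammingNorm
        apply Finset.card_le_card_of_injOn Subtype.val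
        · intro e he
          simp only [Finset.mem_coe, Finset.mem_filter, Finset.mem_univ, true_and] at he
          rw [Finset.mem_coe, Finset.mem_sdiff]
          refine ⟨e.2, fun hmemJ => he ?_⟩
          have := congrFun hfy ⟨e.1, hmemJ⟩
          rw [hf] at this
          simp only [LinearMap.funLeft_apply, Pi.zero_apply] at this
          rwa [show (⟨e.1, hJE hmemJ⟩ : ↥E) = e from Subtype.ext rfl] at this
        · exact Subtype.val_injective.injOn
      rw [Finset.card_sdiff_of_subset hJE, hEcard, hJcard] at hle
      omega
    have hJrank : Module.finrank F
        (C.map (LinearMap.funLeft F F (Subtype.val : ↥J → DLIdx ℓ r h))) = ℓ * r := by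
      rw [aux_map_restrict C hJE, ← hP, ← hf]
      have hrange : P.map f = LinearMap.range (f ∘ₗ P.subtype) := by
        rw [LinearMap.range_comp, Submodule.range_subtype]
      have hginj : Function.Injective (f ∘ₗ P.subtype) := by
        rw [← LinearMap.ker_eq_bot, LinearMap.ker_eq_bot']
        intro z hz
        exact Subtype.ext (hinj z.1 z.2 hz)
      rw [hrange, LinearMap.finrank_range_of_inj hginj, hE1]
    have htopJ : C.map (LinearMap.funLeft F F (Subtype.val : ↥J → DLIdx ℓ r h)) = ⊤ :=
      (aux_rho_eq_card_iff C J).1 (by rw [hJrank, hJcard])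
    have htopI : C.map (LinearMap.funLeft F F (Subtype.val : ↥I → DLIdx ℓ r h)) = ⊤ := by
      rw [aux_map_restrict C hIJ, htopJ, Submodule.map_top, LinearMap.range_eq_top]
      have hinjI : Function.Injective (fun x : ↥I => (⟨x.1, hIJ x.2⟩ : ↥J)) :=
        fun x y hxy => by have hv := congrArg Subtype.val hxy; exact Subtype.ext hv
      exact LinearMap.funLeft_surjective_of_injective F F _ hinjI
    exact (aux_rho_eq_card_iff C I).2 htopI
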